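/- For the whole-line CMV matrix 𝒞 and any n∈ℤ: if n is even, then [𝒞, χ_n^+] = −ρ_n ( ρ_{n−1} |δ_n⟩⟨δ_{n−2}| + conj(α_{n−1}) |δ_n⟩⟨δ_{n−1}| + α_{n+1} |δ_{n−1}⟩⟨δ_n| − ρ_{n+1} |δ_{n−1}⟩⟨δ_{n+1}| ), while if n is odd, then [𝒞, χ_n^+] = ρ_n ( ρ_{n−1} |δ_{n−2}⟩⟨δ_n| + conj(α_{n−1}) |δ_{n−1}⟩⟨δ_n| + α_{n+1} |δ_n⟩⟨δ_{n−1}| − ρ_{n+1} |δ_{n+1}⟩⟨δ_{n−1}| ). In particular, [𝒞, χ_n^+] has rank at most 4. -/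

import Mathlib

open MeasureTheory Filter Topology Complex
open scoped ComplexConjugate ENNReal

noncomputable section

local notation "ℓ²ℤ" => lp (fun _ : ℤ => ℂ) 2
local notation "ℓ²ℕ" => lp (fun _ : ℕ => ℂ) 2
local notation "⟪" x ", " y "⟫" => @inner ℂ _ _ x y

/-- The standard basis vector `δ_n` of `ℓ²(ℤ)`. -/
def delta (n : ℤ) : ℓ²ℤ := lp.single 2 n 1

/-- The standard basis vector indexed by `k` of the half-line space `ℓ²(ℕ)`. -/
def deltaN (k : ℕ) : ℓ²ℕ := lp.single 2 k 1

/-- `ρ_n = (1 - |α_n|²)^{1/2}`. -/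
def rho (α : ℤ → ℂ) (n : ℤ) : ℝ := Real.sqrt (1 - ‖α n‖ ^ 2)

/-- `L = ⊕_{n} Θ_{2n}(α_{2n})`, where `Θ_j(α)` acts on the coordinates `j-1, j`. -/
def IsLOp (α : ℤ → ℂ) (L : ℓ²ℤ →L[ℂ] ℓ²ℤ) : Prop :=
  ∀ u : ℓ²ℤ, ∀ n : ℤ,
    L u (2 * n - 1) = -α (2 * n) * u (2 * n - 1) + (rho α (2 * n) : ℂ) * u (2 * n) ∧
    L u (2 * n) = (rho α (2 * n) : ℂ) * u (2 * n - 1) + conj (α (2 * n)) * u (2 * n)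

/-- `M = ⊕_{n} Θ_{2n+1}(α_{2n+1})`. -/
def IsMOp (α : ℤ → ℂ) (M : ℓ²ℤ →L[ℂ] ℓ²ℤ) : Prop :=
  ∀ u : ℓ²ℤ, ∀ n : ℤ,
    M u (2 * n) = -α (2 * n + 1) * u (2 * n) + (rho α (2 * n + 1) : ℂ) * u (2 * n + 1) ∧
    M u (2 * n + 1) = (rho α (2 * n + 1) : ℂ) * u (2 * n) + conj (α (2 * n + 1)) * u (2 * n + 1)

/-- `χ n` is multiplication by the characteristic function of `[n, ∞)`. -/
def IsChiPlus (χ : ℤ → (ℓ²ℤ →L[ℂ] ℓ²ℤ)) : Prop :=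
  ∀ n : ℤ, ∀ u : ℓ²ℤ, ∀ m : ℤ, χ n u m = if n ≤ m then u m else 0

/-- `χ n` is multiplication by the characteristic function of `(-∞, n]`. -/
def IsChiMinus (χ : ℤ → (ℓ²ℤ →L[ℂ] ℓ²ℤ)) : Prop :=
  ∀ n : ℤ, ∀ u : ℓ²ℤ, ∀ m : ℤ, χ n u m = if m ≤ n then u m else 0


lemma delta_apply' (k m : ℤ) : (delta k : ∀ _ : ℤ, ℂ) m = if m = k then 1 else 0 := by
  simp [delta, lp.single_apply, Pi.single_apply]

lemma inner_delta (k : ℤ) (φ : ℓ²ℤ) : ⟪ delta k, φ⟫ = φ k := by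
  simp [delta, lp.inner_single_left, RCLike.inner_apply]

lemma rowE (α : ℤ → ℂ) (L M : ℓ²ℤ →L[ℂ] ℓ²ℤ) (hL : IsLOp α L) (hM : IsMOp α M)
    (u : ℓ²ℤ) (m : ℤ) (hm : Even m) :
    L (M u) m =
      (rho α m : ℂ) * ((rho α (m-1) : ℂ) * u (m-2) + conj (α (m-1)) * u (m-1))
      + conj (α m) * (-α (m+1) * u m + (rho α (m+1) : ℂ) * u (m+1)) := by
  obtain ⟨j, hj⟩ := hm
  have h1 := (hL (M u) j).2
  have h2 := (hM u (j-1)).2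
  have h3 := (hM u j).1
  rw [show (2*j-1 : ℤ) = m - 1 by omega, show (2*j : ℤ) = m by omega] at h1
  rw [show (2*(j-1)+1 : ℤ) = m - 1 by omega, show (2*(j-1) : ℤ) = m - 2 by omega] at h2
  rw [show (2*j+1 : ℤ) = m + 1 by omega, show (2*j : ℤ) = m by omega] at h3
  rw [h1, h2, h3]

lemma rowO (α : ℤ → ℂ) (L M : ℓ²ℤ →L[ℂ] ℓ²ℤ) (hL : IsLOp α L) (hM : IsMOp α M)
    (u : ℓ²ℤ) (m : ℤ) (hm : Odd m) :
    L (M u) m =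
      -α (m+1) * ((rho α m : ℂ) * u (m-1) + conj (α m) * u m)
      + (rho α (m+1) : ℂ) * (-α (m+2) * u (m+1) + (rho α (m+2) : ℂ) * u (m+2)) := by
  obtain ⟨j, hj⟩ := hm
  have h1 := (hL (M u) (j+1)).1
  have h2 := (hM u j).2
  have h3 := (hM u (j+1)).1
  rw [show (2*(j+1)-1 : ℤ) = m by omega, show (2*(j+1) : ℤ) = m + 1 by omega] at h1
  rw [show (2*j+1 : ℤ) = m by omega, show (2*j : ℤ) = m - 1 by omega] at h2
  rw [show (2*(j+1)+1 : ℤ) = m + 2 by omega, show (2*(j+1) : ℤ) = m + 1 by omega] at h3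
  rw [h1, h2, h3]

set_option maxHeartbeats 2000000 in

/-- The commutator `[𝒞, χ_n^+]` of the CMV matrix with the half-line projection is the
explicit rank-(at most)-four operator of the paper. -/
theorem stmt17
    (α : ℤ → ℂ) (hα : ∀ n, ‖α n‖ < 1)
    (L M : ℓ²ℤ →L[ℂ] ℓ²ℤ) (hL : IsLOp α L) (hM : IsMOp α M)
    (χp : ℤ → (ℓ²ℤ →L[ℂ] ℓ²ℤ)) (hχp : IsChiPlus χp) (n : ℤ) :
    -- `n` even
    (Even n → ∀ φ : ℓ²ℤ,
      ((L ∘L M) ∘L χp n - χp n ∘L (L ∘L M)) φ =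
        -((rho α n : ℂ) • (
          ((rho α (n - 1) : ℂ) * ⟪delta (n - 2), φ⟫) • delta n
          + (conj (α (n - 1)) * ⟪delta (n - 1), φ⟫) • delta n
          + (α (n + 1) * ⟪delta n, φ⟫) • delta (n - 1)
          - ((rho α (n + 1) : ℂ) * ⟪delta (n + 1), φ⟫) • delta (n - 1)))) ∧
    -- `n` odd
    (Odd n → ∀ φ : ℓ²ℤ,
      ((L ∘L M) ∘L χp n - χp n ∘L (L ∘L M)) φ =
        (rho α n : ℂ) • (
          ((rho α (n - 1) : ℂ) * ⟪delta n, φ⟫) • delta (n - 2)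
          + (conj (α (n - 1)) * ⟪delta n, φ⟫) • delta (n - 1)
          + (α (n + 1) * ⟪delta (n - 1), φ⟫) • delta n
          - ((rho α (n + 1) : ℂ) * ⟪delta (n - 1), φ⟫) • delta (n + 1))) ∧
    -- in particular, the commutator has rank at most 4
    (∃ v w : Fin 4 → ℓ²ℤ, ∀ φ : ℓ²ℤ,
      ((L ∘L M) ∘L χp n - χp n ∘L (L ∘L M)) φ = ∑ i : Fin 4, ⟪w i, φ⟫ • v i) := by
  have hLHSc : ∀ (φ : ℓ²ℤ) (m : ℤ), (((L ∘L M) ∘L χp n - χp n ∘L (L ∘L M)) φ) m =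
      L (M (χp n φ)) m - (if n ≤ m then L (M φ) m else 0) := by
    intro φ m
    simp only [ContinuousLinearMap.coe_sub', Pi.sub_apply, ContinuousLinearMap.coe_comp',
      Function.comp_apply, lp.coeFn_sub, Pi.sub_apply]
    rw [hχp n (L (M φ)) m]
  have heven : Even n → ∀ φ : ℓ²ℤ,
      ((L ∘L M) ∘L χp n - χp n ∘L (L ∘L M)) φ =
        -((rho α n : ℂ) • (
          ((rho α (n - 1) : ℂ) * ⟪ delta (n - 2), φ⟫) • delta n
          + (conj (α (n - 1)) * ⟪ delta (n - 1), φ⟫) • delta n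
          + (α (n + 1) * ⟪ delta n, φ⟫) • delta (n - 1)
          - ((rho α (n + 1) : ℂ) * ⟪ delta (n + 1), φ⟫) • delta (n - 1))) := by
    intro hn φ
    obtain ⟨k, hk⟩ := hn
    refine lp.ext (funext fun m => ?_)
    rw [hLHSc φ m]
    simp only [lp.coeFn_neg, lp.coeFn_smul, lp.coeFn_add, lp.coeFn_sub, Pi.neg_apply,
      Pi.smul_apply, Pi.add_apply, Pi.sub_apply, inner_delta, delta_apply', smul_eq_mul]
    rcases Int.even_or_odd m with hm | hm
    · obtain ⟨j, hj⟩ := hm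
      rw [rowE α L M hL hM (χp n φ) m ⟨j, hj⟩, rowE α L M hL hM φ m ⟨j, hj⟩,
        hχp n φ (m-2), hχp n φ (m-1), hχp n φ m, hχp n φ (m+1)]
      rcases eq_or_ne m n with rfl | hne
      · split_ifs <;> first | omega | ring
      · split_ifs <;> first | omega | ring
    · obtain ⟨j, hj⟩ := hm
      rw [rowO α L M hL hM (χp n φ) m ⟨j, hj⟩, rowO α L M hL hM φ m ⟨j, hj⟩,
        hχp n φ (m-1), hχp n φ m, hχp n φ (m+1), hχp n φ (m+2)]
      rcases eq_or_ne m (n-1) with rfl | hne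
      · simp only [show (n-1+1 : ℤ) = n by ring, show (n-1+2 : ℤ) = n + 1 by ring]
        split_ifs <;> first | omega | ring
      · split_ifs <;> first | omega | ring
  have hodd : Odd n → ∀ φ : ℓ²ℤ,
      ((L ∘L M) ∘L χp n - χp n ∘L (L ∘L M)) φ =
        (rho α n : ℂ) • (
          ((rho α (n - 1) : ℂ) * ⟪ delta n, φ⟫) • delta (n - 2)
          + (conj (α (n - 1)) * ⟪ delta n, φ⟫) • delta (n - 1)
          + (α (n + 1) * ⟪ delta (n - 1), φ⟫) • delta n
          - ((rho α (n + 1) : ℂ) * ⟪ delta (n - 1), φ⟫) • delta (n + 1)) := by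
    intro hn φ
    obtain ⟨k, hk⟩ := hn
    refine lp.ext (funext fun m => ?_)
    rw [hLHSc φ m]
    simp only [lp.coeFn_neg, lp.coeFn_smul, lp.coeFn_add, lp.coeFn_sub, Pi.neg_apply,
      Pi.smul_apply, Pi.add_apply, Pi.sub_apply, inner_delta, delta_apply', smul_eq_mul]
    rcases Int.even_or_odd m with hm | hm
    · obtain ⟨j, hj⟩ := hm
      rw [rowE α L M hL hM (χp n φ) m ⟨j, hj⟩, rowE α L M hL hM φ m ⟨j, hj⟩,
        hχp n φ (m-2), hχp n φ (m-1), hχp n φ m, hχp n φ (m+1)]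
      rcases eq_or_ne m (n-1) with rfl | hne1
      · simp only [show (n-1+1 : ℤ) = n by ring]
        split_ifs <;> first | omega | ring
      · rcases eq_or_ne m (n+1) with rfl | hne2
        · simp only [show (n+1-1 : ℤ) = n by ring, show (n+1-2 : ℤ) = n - 1 by ring]
          split_ifs <;> first | omega | ring
        · split_ifs <;> first | omega | ring
    · obtain ⟨j, hj⟩ := hm
      rw [rowO α L M hL hM (χp n φ) m ⟨j, hj⟩, rowO α L M hL hM φ m ⟨j, hj⟩,
        hχp n φ (m-1), hχp n φ m, hχp n φ (m+1), hχp n φ (m+2)]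
      rcases eq_or_ne m (n-2) with rfl | hne1
      · simp only [show (n-2+1 : ℤ) = n - 1 by ring, show (n-2+2 : ℤ) = n by ring]
        split_ifs <;> first | omega | ring
      · rcases eq_or_ne m n with rfl | hne2
        · split_ifs <;> first | omega | ring
        · split_ifs <;> first | omega | ring
  refine ⟨heven, hodd, ?_⟩
  rcases Int.even_or_odd n with hn | hn
  · refine ⟨![(-((rho α n : ℂ) * (rho α (n-1) : ℂ))) • delta n,
        (-((rho α n : ℂ) * conj (α (n-1)))) • delta n,
        (-((rho α n : ℂ) * α (n+1))) • delta (n-1),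
        ((rho α n : ℂ) * (rho α (n+1) : ℂ)) • delta (n-1)],
      ![delta (n-2), delta (n-1), delta n, delta (n+1)], fun φ => ?_⟩
    rw [heven hn φ]
    simp only [Fin.sum_univ_four, Matrix.cons_val_zero, Matrix.cons_val_one, Matrix.head_cons,
      Matrix.cons_val_two, Matrix.tail_cons, Matrix.cons_val_three]
    module
  · refine ⟨![((rho α n : ℂ) * (rho α (n-1) : ℂ)) • delta (n-2),
        ((rho α n : ℂ) * conj (α (n-1))) • delta (n-1),
        ((rho α n : ℂ) * α (n+1)) • delta n,
        (-((rho α n : ℂ) * (rho α (n+1) : ℂ))) • delta (n+1)],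
      ![delta n, delta n, delta (n-1), delta (n-1)], fun φ => ?_⟩
    rw [hodd hn φ]
    simp only [Fin.sum_univ_four, Matrix.cons_val_zero, Matrix.cons_val_one, Matrix.head_cons,
      Matrix.cons_val_two, Matrix.tail_cons, Matrix.cons_val_three]
    module
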